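/- Let ε > 0 and let n ≥ 1 be an integer. For x ∈ ℝ^n let μ_x denote the n-fold product probability measure on ℝ^n whose i-th factor has density t ↦ (ε/2)·exp(−ε·|t − xᵢ|) with respect to Lebesgue measure. Then for all x, y ∈ ℝ^n and every Borel measurable set S ⊆ ℝ^n, μ_x(S) ≤ exp(ε·‖x − y‖₁)·μ_y(S), where ‖x − y‖₁ = Σ_{i=1}^n |xᵢ − yᵢ|. -/

import Mathlib

open MeasureTheory ENNReal

/-- The Laplace distribution on `ℝ` with scale `1/ε` centered at `r`: the measure with
density `x ↦ (ε/2) * exp (−ε * |x − r|)` with respect to Lebesgue measure. -/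
noncomputable def laplaceMeasureAt (ε r : ℝ) : Measure ℝ :=
  MeasureTheory.volume.withDensity
    (fun x => ENNReal.ofReal ((ε / 2) * Real.exp (-ε * |x - r|)))

/-- The vector Laplace mechanism: the product measure on `ℝ^n` whose `i`-th factor is
the Laplace distribution with scale `1/ε` centered at `x i`. -/
noncomputable def laplaceMechanism (ε : ℝ) (n : ℕ) (x : Fin n → ℝ) :
    Measure (Fin n → ℝ) :=
  Measure.pi (fun i => laplaceMeasureAt ε (x i))

lemma prod_mono_smul {α β : Type*} [MeasurableSpace α] [MeasurableSpace β]
    (μ₁ ν₁ : Measure α) (μ₂ ν₂ : Measure β) [SigmaFinite μ₂] [SigmaFinite ν₂]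
    (c₁ c₂ : ℝ≥0∞) (hc₂ : c₂ ≠ ∞) (h₁ : μ₁ ≤ c₁ • ν₁) (h₂ : μ₂ ≤ c₂ • ν₂) :
    μ₁.prod μ₂ ≤ (c₁ * c₂) • ν₁.prod ν₂ := by
  intro s
  rcases exists_measurable_superset (ν₁.prod ν₂) s with ⟨t, hst, ht, htm⟩
  calc μ₁.prod μ₂ s ≤ μ₁.prod μ₂ t := measure_mono hst
    _ ≤ ((c₁ * c₂) • ν₁.prod ν₂) t := ?_
    _ = ((c₁ * c₂) • ν₁.prod ν₂) s := by
        simp only [Measure.smul_apply, smul_eq_mul, htm]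
  rw [Measure.prod_apply ht, Measure.smul_apply, Measure.prod_apply ht]
  have h2' : ∀ a : α, μ₂ (Prod.mk a ⁻¹' t) ≤ c₂ * ν₂ (Prod.mk a ⁻¹' t) := fun a => h₂ _
  calc ∫⁻ a, μ₂ (Prod.mk a ⁻¹' t) ∂μ₁
      ≤ ∫⁻ a, c₂ * ν₂ (Prod.mk a ⁻¹' t) ∂μ₁ := lintegral_mono h2'
    _ ≤ ∫⁻ a, c₂ * ν₂ (Prod.mk a ⁻¹' t) ∂(c₁ • ν₁) := lintegral_mono' h₁ le_rfl
    _ = c₁ * (c₂ * ∫⁻ a, ν₂ (Prod.mk a ⁻¹' t) ∂ν₁) := by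
        rw [lintegral_smul_measure, lintegral_const_mul' _ _ hc₂, smul_eq_mul]
    _ = _ := by rw [smul_eq_mul, mul_assoc]

lemma pi_mono_smul : ∀ (n : ℕ) (μ ν : Fin n → Measure ℝ),
    (∀ i, SigmaFinite (μ i)) → (∀ i, SigmaFinite (ν i)) →
    ∀ (c : Fin n → ℝ≥0∞), (∀ i, c i ≠ ∞) → (∀ i, μ i ≤ c i • ν i) →
    Measure.pi μ ≤ (∏ i, c i) • Measure.pi ν := by
  intro n
  induction n with
  | zero =>
      intro μ ν _ _ c _ _
      rw [Measure.pi_of_empty, Measure.pi_of_empty]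
      simp
  | succ n ih =>
      intro μ ν hμ hν c hc h
      haveI := hμ; haveI := hν
      have key : Measure.pi μ ≤
          (c 0 * ∏ j : Fin n, c (Fin.succAbove 0 j)) • Measure.pi ν := by
        rw [Measure.le_iff]
        intro s hs
        set e := MeasurableEquiv.piFinSuccAbove (fun _ : Fin (n + 1) => ℝ) 0 with he
        have hpμ := MeasureTheory.measurePreserving_piFinSuccAbove μ 0
        have hpν := MeasureTheory.measurePreserving_piFinSuccAbove ν 0
        have hts : MeasurableSet (e.symm ⁻¹' s) := e.symm.measurable hs
        have hμs : Measure.pi μ s = ((μ 0).prod (Measure.pi fun j => μ (Fin.succAbove 0 j)))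
            (e.symm ⁻¹' s) := by
          rw [← hpμ.map_eq, MeasureTheory.Measure.map_apply e.measurable hts]
          congr 1
          ext z; simp
        have hνs : Measure.pi ν s = ((ν 0).prod (Measure.pi fun j => ν (Fin.succAbove 0 j)))
            (e.symm ⁻¹' s) := by
          rw [← hpν.map_eq, MeasureTheory.Measure.map_apply e.measurable hts]
          congr 1
          ext z; simp
        rw [hμs, Measure.smul_apply, hνs]
        have := prod_mono_smul (μ 0) (ν 0)
          (Measure.pi fun j => μ (Fin.succAbove 0 j)) (Measure.pi fun j => ν (Fin.succAbove 0 j))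
          (c 0) (∏ j : Fin n, c (Fin.succAbove 0 j))
          (by exact ENNReal.prod_ne_top fun j _ => hc _)
          (h 0)
          (ih _ _ (fun j => hμ _) (fun j => hν _) _ (fun j => hc _) (fun j => h _))
        exact this _
      refine key.trans (le_of_eq ?_)
      congr 1
      rw [Fin.prod_univ_succAbove c 0]

instance laplaceMeasureAt.sigmaFinite (ε r : ℝ) : SigmaFinite (laplaceMeasureAt ε r) := by
  unfold laplaceMeasureAt
  infer_instance

lemma laplaceMeasureAt_le (ε : ℝ) (hε : 0 < ε) (a b : ℝ) :
    laplaceMeasureAt ε a ≤ ENNReal.ofReal (Real.exp (ε * |a - b|)) • laplaceMeasureAt ε b := by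
  unfold laplaceMeasureAt
  have hmeas : Measurable (fun x : ℝ => ENNReal.ofReal ((ε / 2) * Real.exp (-ε * |x - b|))) := by
    apply Measurable.ennreal_ofReal
    exact (measurable_const.mul (((measurable_id.sub measurable_const).abs.const_mul (-ε)).exp))
  rw [← withDensity_smul _ hmeas]
  apply withDensity_mono
  filter_upwards with t
  simp only [Pi.smul_apply, smul_eq_mul, ← ENNReal.ofReal_mul (Real.exp_nonneg _)]
  apply ENNReal.ofReal_le_ofReal
  rw [← mul_assoc, mul_comm (Real.exp _), mul_assoc, ← Real.exp_add]
  apply mul_le_mul_of_nonneg_left _ (by linarith)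
  apply Real.exp_le_exp.mpr
  have : |t - a| + |a - b| ≥ |t - b| := by
    have := abs_sub_le t a b
    linarith
  nlinarith [abs_nonneg (t - a), abs_nonneg (a - b), abs_nonneg (t - b)]

/-- **ℓ₁-sensitivity guarantee of the vector Laplace mechanism**: for `ε > 0`,
all `x, y ∈ ℝⁿ` and every Borel set `S ⊆ ℝⁿ`,
`μ_x(S) ≤ exp(ε ‖x − y‖₁) · μ_y(S)`. -/
theorem laplace_mechanism_vector_DP (ε : ℝ) (hε : 0 < ε) (n : ℕ) (hn : 1 ≤ n)
    (x y : Fin n → ℝ) (S : Set (Fin n → ℝ)) (hS : MeasurableSet S) :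
    laplaceMechanism ε n x S ≤
      ENNReal.ofReal (Real.exp (ε * ∑ i, |x i - y i|)) * laplaceMechanism ε n y S := by
  have key := pi_mono_smul n (fun i => laplaceMeasureAt ε (x i)) (fun i => laplaceMeasureAt ε (y i))
    (fun i => inferInstance) (fun i => inferInstance)
    (fun i => ENNReal.ofReal (Real.exp (ε * |x i - y i|)))
    (fun i => ENNReal.ofReal_ne_top)
    (fun i => laplaceMeasureAt_le ε hε (x i) (y i))
  have hprod : (∏ i, ENNReal.ofReal (Real.exp (ε * |x i - y i|))) =
      ENNReal.ofReal (Real.exp (ε * ∑ i, |x i - y i|)) := by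
    rw [Finset.mul_sum, Real.exp_sum, ← ENNReal.ofReal_prod_of_nonneg]
    intro i _
    exact Real.exp_nonneg _
  have hfin := key S
  rw [Measure.smul_apply, hprod, smul_eq_mul] at hfin
  exact hfin
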